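/- Fix λ ≥ 0. Let T be a branch-length binary tree with all branch lengths nonnegative that is ultrametric with depth d (i.e., Depth T d holds). Then D(T) ≥ exp(−2λd). -/
import Mathlib


/-- A branch-length binary tree: internal nodes carry the lengths of the
two branches to the subtrees. -/
inductive BLTree : Type
  | leaf : BLTree
  | node : ℝ → ℝ → BLTree → BLTree → BLTree

/-- The pair (α(T), β(T)) of Fitch probabilities, with conservation
probability p(t) = (1 + exp(-2λt))/2 on a branch of length t. -/
noncomputable def fitchAB (lam : ℝ) : BLTree → ℝ × ℝ
  | .leaf => (1, 0)
  | .node tX tY X Y =>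
      let aX := (fitchAB lam X).1; let bX := (fitchAB lam X).2
      let aY := (fitchAB lam Y).1; let bY := (fitchAB lam Y).2
      let pX := (1 + Real.exp (-2 * lam * tX)) / 2
      let pY := (1 + Real.exp (-2 * lam * tY)) / 2
      let qX := 1 - pX; let qY := 1 - pY
      ((pX * aX + qX * bX) * (pY * aY + qY * bY)
        + (pX * aX + qX * bX) * (1 - aY - bY)
        + (1 - aX - bX) * (pY * aY + qY * bY),
       (qX * aX + pX * bX) * (qY * aY + pY * bY)
        + (qX * aX + pX * bX) * (1 - aY - bY)
        + (1 - aX - bX) * (qY * aY + pY * bY))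

/-- D(T) = α(T) - β(T). -/
noncomputable def fitchD (lam : ℝ) (T : BLTree) : ℝ := (fitchAB lam T).1 - (fitchAB lam T).2

/-- All branch lengths are nonnegative. -/
def nonnegLengths : BLTree → Prop
  | .leaf => True
  | .node tX tY X Y => 0 ≤ tX ∧ 0 ≤ tY ∧ nonnegLengths X ∧ nonnegLengths Y

/-- `Depth T d`: the tree is ultrametric with every root-to-leaf path of total length d. -/
def Depth : BLTree → ℝ → Prop
  | .leaf, d => d = 0
  | .node tX tY X Y, d => Depth X (d - tX) ∧ Depth Y (d - tY)

lemma fitchAB_bounds (lam : ℝ) (hlam : 0 ≤ lam) (T : BLTree) (hT : nonnegLengths T) :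
    0 ≤ (fitchAB lam T).1 ∧ 0 ≤ (fitchAB lam T).2 ∧ (fitchAB lam T).1 + (fitchAB lam T).2 ≤ 1 := by
  induction T with
  | leaf => simp [fitchAB]
  | node tX tY X Y ihX ihY =>
    obtain ⟨htX, htY, hX, hY⟩ := hT
    obtain ⟨haX, hbX, hsX⟩ := ihX hX
    obtain ⟨haY, hbY, hsY⟩ := ihY hY
    have heX1 : Real.exp (-2 * lam * tX) ≤ 1 := by
      apply Real.exp_le_one_iff.mpr; nlinarith
    have heY1 : Real.exp (-2 * lam * tY) ≤ 1 := by
      apply Real.exp_le_one_iff.mpr; nlinarith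
    have heX0 : 0 < Real.exp (-2 * lam * tX) := Real.exp_pos _
    have heY0 : 0 < Real.exp (-2 * lam * tY) := Real.exp_pos _
    simp only [fitchAB]
    set aX := (fitchAB lam X).1
    set bX := (fitchAB lam X).2
    set aY := (fitchAB lam Y).1
    set bY := (fitchAB lam Y).2
    set pX := (1 + Real.exp (-2 * lam * tX)) / 2 with hpX
    set pY := (1 + Real.exp (-2 * lam * tY)) / 2 with hpY
    have hA : 0 ≤ pX * aX + (1 - pX) * bX := by
      apply add_nonneg <;> apply mul_nonneg <;> linarith
    have hB : 0 ≤ (1 - pX) * aX + pX * bX := by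
      apply add_nonneg <;> apply mul_nonneg <;> linarith
    have hA' : 0 ≤ pY * aY + (1 - pY) * bY := by
      apply add_nonneg <;> apply mul_nonneg <;> linarith
    have hB' : 0 ≤ (1 - pY) * aY + pY * bY := by
      apply add_nonneg <;> apply mul_nonneg <;> linarith
    have hcX : 0 ≤ 1 - aX - bX := by linarith
    have hcY : 0 ≤ 1 - aY - bY := by linarith
    refine ⟨?_, ?_, ?_⟩
    · have := mul_nonneg hA hA'
      have := mul_nonneg hA hcY
      have := mul_nonneg hcX hA'
      linarith
    · have := mul_nonneg hB hB'
      have := mul_nonneg hB hcY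
      have := mul_nonneg hcX hB'
      linarith
    · have h1 := mul_nonneg hA hB'
      have h2 := mul_nonneg hB hA'
      have h3 := mul_nonneg hcX hcY
      have key : ((pX * aX + (1 - pX) * bX) * (pY * aY + (1 - pY) * bY)
            + (pX * aX + (1 - pX) * bX) * (1 - aY - bY)
            + (1 - aX - bX) * (pY * aY + (1 - pY) * bY))
          + (((1 - pX) * aX + pX * bX) * ((1 - pY) * aY + pY * bY)
            + ((1 - pX) * aX + pX * bX) * (1 - aY - bY)
            + (1 - aX - bX) * ((1 - pY) * aY + pY * bY))
          + ((pX * aX + (1 - pX) * bX) * ((1 - pY) * aY + pY * bY)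
            + ((1 - pX) * aX + pX * bX) * (pY * aY + (1 - pY) * bY)
            + (1 - aX - bX) * (1 - aY - bY))
          = (aX + bX + (1 - aX - bX)) * (aY + bY + (1 - aY - bY)) := by ring
      nlinarith [h1, h2, h3, key]

/-- In an ultrametric tree of depth d with nonnegative branch lengths,
D(T) ≥ exp(-2λd). -/
theorem fitchD_ge_exp (lam : ℝ) (hlam : 0 ≤ lam)
    (T : BLTree) (hT : nonnegLengths T) (d : ℝ) (hd : Depth T d) :
    fitchD lam T ≥ Real.exp (-2 * lam * d) := by
  induction T generalizing d with
  | leaf =>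
    have : d = 0 := hd
    subst this
    simp [fitchD, fitchAB]
  | node tX tY X Y ihX ihY =>
    obtain ⟨htX, htY, hX, hY⟩ := hT
    obtain ⟨hdX, hdY⟩ := hd
    have hDX := ihX hX _ hdX
    have hDY := ihY hY _ hdY
    obtain ⟨haX, hbX, hsX⟩ := fitchAB_bounds lam hlam X hX
    obtain ⟨haY, hbY, hsY⟩ := fitchAB_bounds lam hlam Y hY
    have heX0 : 0 < Real.exp (-2 * lam * tX) := Real.exp_pos _
    have heY0 : 0 < Real.exp (-2 * lam * tY) := Real.exp_pos _
    have hE0 : 0 < Real.exp (-2 * lam * d) := Real.exp_pos _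
    have hEX : Real.exp (-2 * lam * d)
        ≤ Real.exp (-2 * lam * tX) * ((fitchAB lam X).1 - (fitchAB lam X).2) := by
      have h1 : Real.exp (-2 * lam * tX) * Real.exp (-2 * lam * (d - tX))
          = Real.exp (-2 * lam * d) := by
        rw [← Real.exp_add]; ring_nf
      have := mul_le_mul_of_nonneg_left hDX heX0.le
      rw [fitchD] at this
      linarith [h1 ▸ this]
    have hEY : Real.exp (-2 * lam * d)
        ≤ Real.exp (-2 * lam * tY) * ((fitchAB lam Y).1 - (fitchAB lam Y).2) := by
      have h1 : Real.exp (-2 * lam * tY) * Real.exp (-2 * lam * (d - tY))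
          = Real.exp (-2 * lam * d) := by
        rw [← Real.exp_add]; ring_nf
      have := mul_le_mul_of_nonneg_left hDY heY0.le
      rw [fitchD] at this
      linarith [h1 ▸ this]
    set aX := (fitchAB lam X).1
    set bX := (fitchAB lam X).2
    set aY := (fitchAB lam Y).1
    set bY := (fitchAB lam Y).2
    set eX := Real.exp (-2 * lam * tX)
    set eY := Real.exp (-2 * lam * tY)
    set E := Real.exp (-2 * lam * d)
    have key : fitchD lam (.node tX tY X Y)
        = eX * (aX - bX) * (1 + (1 - aY - bY)) / 2
          + eY * (aY - bY) * (1 + (1 - aX - bX)) / 2 := by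
      simp only [fitchD, fitchAB]
      ring
    rw [key]
    nlinarith [mul_nonneg (sub_nonneg.mpr hEX) (by linarith : (0:ℝ) ≤ 1 + (1 - aY - bY)),
      mul_nonneg (sub_nonneg.mpr hEY) (by linarith : (0:ℝ) ≤ 1 + (1 - aX - bX)),
      mul_nonneg hE0.le (by linarith : (0:ℝ) ≤ (1 - aX - bX) + (1 - aY - bY))]
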